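/- Let H be the N×N tridiagonal matrix with zero diagonal and off-diagonal entries J_n = (1/2)√(n(N-n)). Then exp(-iπH) e_1 = e^{iφ} e_N for some phase φ; i.e., this chain achieves perfect state transfer in time t_0 = π. -/

import Mathlib

open Matrix

open NormedSpace in
lemma exp_mulVec_eigen {N : ℕ} (A : Matrix (Fin N) (Fin N) ℂ) (v : Fin N → ℂ) (μ : ℂ)
    (h : A.mulVec v = μ • v) :
    (exp A).mulVec v = exp μ • v := by
  letI : SeminormedRing (Matrix (Fin N) (Fin N) ℂ) := Matrix.linftyOpSemiNormedRing
  letI : NormedRing (Matrix (Fin N) (Fin N) ℂ) := Matrix.linftyOpNormedRing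
  letI : NormedAlgebra ℂ (Matrix (Fin N) (Fin N) ℂ) := Matrix.linftyOpNormedAlgebra
  have hpow : ∀ n : ℕ, (A ^ n).mulVec v = (μ ^ n) • v := by
    intro n; induction n with
    | zero => simp
    | succ n ih =>
      rw [pow_succ', ← Matrix.mulVec_mulVec, ih, Matrix.mulVec_smul, h, smul_smul, ← pow_succ]
  let f : Matrix (Fin N) (Fin N) ℂ →ₗ[ℂ] (Fin N → ℂ) :=
    { toFun := fun M => M.mulVec v
      map_add' := fun M M' => Matrix.add_mulVec M M' v
      map_smul' := fun c M => Matrix.smul_mulVec c M v }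
  let g := f.toContinuousLinearMap
  have hs : Summable fun n : ℕ => ((n.factorial : ℂ))⁻¹ • A ^ n := expSeries_summable' A
  have hsμ : Summable fun n : ℕ => ((n.factorial : ℂ))⁻¹ * μ ^ n := by
    simpa [smul_eq_mul] using expSeries_summable' (𝕂 := ℂ) μ
  have h1 : (exp A).mulVec v = g (∑' n : ℕ, ((n.factorial : ℂ))⁻¹ • A ^ n) := by
    rw [exp_eq_tsum ℂ]; rfl
  rw [h1, g.map_tsum hs]
  have h2 : ∀ n : ℕ, g (((n.factorial : ℂ))⁻¹ • A ^ n) = (((n.factorial : ℂ))⁻¹ * μ ^ n) • v := by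
    intro n
    show ((((n.factorial : ℂ))⁻¹ • A ^ n)).mulVec v = _
    rw [Matrix.smul_mulVec, hpow, smul_smul]
  simp_rw [h2]
  rw [hsμ.tsum_smul_const, exp_eq_tsum ℂ]
  simp [smul_eq_mul]

section Kraw
open Polynomial

noncomputable def krawP (N' n : ℕ) : ℤ[X] := (1 - X) ^ n * (1 + X) ^ (N' - n)

noncomputable def kraw (N' m n : ℕ) : ℤ := (krawP N' n).coeff m

lemma coeff_X_mul_derivative (p : ℤ[X]) (m : ℕ) :
    (X * derivative p).coeff m = m * p.coeff m := by
  cases m with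
  | zero => simp [Polynomial.mul_coeff_zero]
  | succ k =>
    rw [Polynomial.coeff_X_mul, Polynomial.coeff_derivative]
    push_cast; ring

lemma krawP_rec (N' n : ℕ) (hn : n ≤ N') :
    C (n : ℤ) * krawP N' (n - 1) + C ((N' : ℤ) - (n : ℤ)) * krawP N' (n + 1)
      + C 2 * (X * derivative (krawP N' n)) = C (N' : ℤ) * krawP N' n := by
  have d1 : derivative (1 - X : ℤ[X]) = -1 := by simp
  have d2 : derivative (1 + X : ℤ[X]) = 1 := by simp
  have hc2 : (C 2 : ℤ[X]) = 2 := by norm_num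
  rcases Nat.eq_zero_or_pos n with rfl | hn0
  · rcases Nat.eq_zero_or_pos N' with rfl | hN0
    · simp [krawP]
    · obtain ⟨c, rfl⟩ := Nat.exists_eq_succ_of_ne_zero hN0.ne'
      simp only [krawP, Nat.zero_sub, Nat.sub_zero, Nat.succ_sub_one, pow_zero, one_mul,
        Nat.cast_zero, Nat.succ_eq_add_one]
      rw [derivative_pow, d2]
      push_cast
      rw [pow_succ (1 + X : ℤ[X]) c]
      simp only [map_add, map_sub, _root_.map_one, map_zero, Nat.cast_zero, Polynomial.C_eq_natCast, hc2]
      ring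
  · obtain ⟨a, rfl⟩ := Nat.exists_eq_succ_of_ne_zero hn0.ne'
    rcases eq_or_lt_of_le hn with rfl | hlt
    · simp only [krawP, Nat.succ_sub_one, Nat.add_sub_cancel, Nat.sub_self, pow_zero, mul_one,
        Nat.succ_eq_add_one]
      rw [show a + 1 - (a + 1 + 1) = 0 from by omega, show a + 1 - a = 1 from by omega]
      rw [derivative_pow, d1]
      push_cast
      rw [pow_succ (1 - X : ℤ[X]) a, pow_one, pow_zero]
      simp only [map_add, map_sub, _root_.map_one, map_zero, Nat.cast_zero, Polynomial.C_eq_natCast, hc2]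
      ring
    · obtain ⟨b, hb⟩ : ∃ b, N' = a + b + 2 := ⟨N' - a - 2, by omega⟩
      subst hb
      simp only [krawP, Nat.succ_eq_add_one, Nat.add_sub_cancel]
      rw [show a + b + 2 - a = b + 2 from by omega, show a + b + 2 - (a + 1) = b + 1 from by omega,
        show a + b + 2 - (a + 1 + 1) = b from by omega]
      rw [derivative_mul, derivative_pow, derivative_pow, d1, d2]
      push_cast
      rw [pow_succ (1 - X : ℤ[X]) a, show b + 2 = (b + 1) + 1 from rfl,
        pow_succ (1 + X : ℤ[X]) (b + 1), pow_succ (1 + X : ℤ[X]) b,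
        pow_succ (1 - X : ℤ[X]) (a + 1)]
      simp only [map_add, map_sub, _root_.map_one, map_zero, Nat.cast_zero, Polynomial.C_eq_natCast, hc2]
      ring

lemma kraw_rec (N' m n : ℕ) (hn : n ≤ N') :
    (n : ℤ) * kraw N' m (n - 1) + ((N' : ℤ) - (n : ℤ)) * kraw N' m (n + 1)
      + 2 * (m : ℤ) * kraw N' m n = (N' : ℤ) * kraw N' m n := by
  have h := congrArg (fun p : ℤ[X] => p.coeff m) (krawP_rec N' n hn)
  simp only [Polynomial.coeff_add, Polynomial.coeff_C_mul, coeff_X_mul_derivative] at h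
  unfold kraw
  linarith [h]

lemma coeff_comp_neg_X (p : ℤ[X]) (m : ℕ) :
    (p.comp (-X)).coeff m = (-1) ^ m * p.coeff m := by
  induction p using Polynomial.induction_on' with
  | add p q hp hq => simp [add_comp, hp, hq, mul_add]
  | monomial k c =>
    have h1 : (monomial k c : ℤ[X]).comp (-X) = C ((-1) ^ k * c) * X ^ k := by
      rw [← C_mul_X_pow_eq_monomial, mul_comp, pow_comp, C_comp, X_comp, neg_pow (X : ℤ[X]) k,
        show (-1 : ℤ[X]) = C (-1) from by simp, ← C_pow, ← mul_assoc,
        mul_comm (C c) (C ((-1 : ℤ) ^ k)), ← C_mul]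
    rw [h1, coeff_C_mul_X_pow, Polynomial.coeff_monomial]
    rcases eq_or_ne k m with rfl | hkm
    · simp
    · simp [hkm, Ne.symm hkm]

lemma kraw_symm (N' m n : ℕ) (hn : n ≤ N') :
    kraw N' m (N' - n) = (-1) ^ m * kraw N' m n := by
  have key : krawP N' (N' - n) = (krawP N' n).comp (-X) := by
    unfold krawP
    rw [show N' - (N' - n) = n from by omega]
    simp [mul_comp, pow_comp, sub_comp, add_comp, one_comp, X_comp, mul_comm, sub_eq_add_neg]
  unfold kraw
  rw [key, coeff_comp_neg_X]

lemma kraw_zero (N' m : ℕ) : kraw N' m 0 = N'.choose m := by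
  unfold kraw krawP
  rw [pow_zero, one_mul, Nat.sub_zero, add_comm, Polynomial.coeff_X_add_one_pow]

end Kraw

/-- The spin-`(N-1)/2` `Jₓ` matrix over `ℂ`: tridiagonal, zero diagonal, off-diagonal
entries `Jₙ = (1/2)√(n(N-n))` (0-indexed coupling `(1/2)√((n+1)(N-n-1))` between sites
`n` and `n+1`). -/
noncomputable def jxMatrixC (N : ℕ) : Matrix (Fin N) (Fin N) ℂ :=
  Matrix.of fun i j =>
    if (i : ℕ) = j then 0
    else if (i : ℕ) + 1 = j then
      ((1 / 2) * Real.sqrt (((i : ℕ) + 1) * (N - ((i : ℕ) + 1))) : ℝ)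
    else if (j : ℕ) + 1 = i then
      ((1 / 2) * Real.sqrt (((j : ℕ) + 1) * (N - ((j : ℕ) + 1))) : ℝ)
    else 0

lemma jx_mulVec (N : ℕ) (v : Fin N → ℂ) (i : Fin N) :
    (jxMatrixC N).mulVec v i =
      (if h : (i : ℕ) + 1 < N then
        (((1 / 2) * Real.sqrt (((i : ℕ) + 1) * (N - ((i : ℕ) + 1))) : ℝ) : ℂ) * v ⟨(i : ℕ) + 1, h⟩
      else 0)
      + (if h : 0 < (i : ℕ) then
        (((1 / 2) * Real.sqrt (((i : ℕ)) * (N - (i : ℕ))) : ℝ) : ℂ) * v ⟨(i : ℕ) - 1, by omega⟩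
      else 0) := by
  classical
  have step : ∀ j : Fin N, jxMatrixC N i j * v j =
      (if (i : ℕ) + 1 = (j : ℕ) then
        (((1 / 2) * Real.sqrt (((i : ℕ) + 1) * (N - ((i : ℕ) + 1))) : ℝ) : ℂ) * v j else 0)
      + (if (j : ℕ) + 1 = (i : ℕ) then
        (((1 / 2) * Real.sqrt (((j : ℕ) + 1) * (N - ((j : ℕ) + 1))) : ℝ) : ℂ) * v j else 0) := by
    intro j
    simp only [jxMatrixC, Matrix.of_apply]
    by_cases h1 : (i : ℕ) = (j : ℕ)
    · rw [if_pos h1, if_neg (by omega), if_neg (by omega)]; ring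
    · rw [if_neg h1]
      by_cases h2 : (i : ℕ) + 1 = (j : ℕ)
      · rw [if_pos h2, if_pos h2, if_neg (by omega)]
        ring
      · rw [if_neg h2, if_neg h2]
        by_cases h3 : (j : ℕ) + 1 = (i : ℕ)
        · rw [if_pos h3, if_pos h3]; ring
        · rw [if_neg h3, if_neg h3]; ring
  rw [Matrix.mulVec, dotProduct]
  calc ∑ j, jxMatrixC N i j * v j
      = ∑ j : Fin N, ((if (i : ℕ) + 1 = (j : ℕ) then
          (((1 / 2) * Real.sqrt (((i : ℕ) + 1) * (N - ((i : ℕ) + 1))) : ℝ) : ℂ) * v j else 0)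
        + (if (j : ℕ) + 1 = (i : ℕ) then
          (((1 / 2) * Real.sqrt (((j : ℕ) + 1) * (N - ((j : ℕ) + 1))) : ℝ) : ℂ) * v j else 0)) :=
        Finset.sum_congr rfl fun j _ => step j
    _ = _ := by
        rw [Finset.sum_add_distrib]
        congr 1
        · by_cases h : (i : ℕ) + 1 < N
          · rw [dif_pos h]
            rw [Finset.sum_eq_single (⟨(i : ℕ) + 1, h⟩ : Fin N)]
            · rw [if_pos rfl]
            · intro j _ hj
              rw [if_neg (fun hc => hj (by simp only [Fin.ext_iff]; omega))]
            · intro hj; exact absurd (Finset.mem_univ _) hj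
          · rw [dif_neg h]
            exact Finset.sum_eq_zero fun j _ => if_neg (by have := j.isLt; omega)
        · by_cases h : 0 < (i : ℕ)
          · rw [dif_pos h]
            rw [Finset.sum_eq_single (⟨(i : ℕ) - 1, by omega⟩ : Fin N)]
            · have hval : ((⟨(i : ℕ) - 1, by omega⟩ : Fin N) : ℕ) = (i : ℕ) - 1 := rfl
              rw [if_pos (by rw [hval]; omega)]
              rw [hval, show ((((i : ℕ) - 1 : ℕ) : ℝ) + 1) = (((i : ℕ) : ℕ) : ℝ) from by
                rw [Nat.cast_sub (by omega : 1 ≤ (i : ℕ))]; ring]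
            · intro j _ hj
              rw [if_neg (fun hc => hj (by simp only [Fin.ext_iff]; omega))]
            · intro hj; exact absurd (Finset.mem_univ _) hj
          · rw [dif_neg h]
            exact Finset.sum_eq_zero fun j _ => if_neg (by omega)

lemma nat_idA (N' n : ℕ) (h1 : 1 ≤ n) (h2 : n ≤ N') :
    n * (N' + 1 - n) * N'.choose (n - 1) = n ^ 2 * N'.choose n := by
  have h0 := Nat.choose_succ_right_eq N' (n - 1)
  rw [show n - 1 + 1 = n from by omega, show N' - (n - 1) = N' + 1 - n from by omega] at h0
  calc n * (N' + 1 - n) * N'.choose (n - 1) = n * (N'.choose (n - 1) * (N' + 1 - n)) := by ring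
    _ = n * (N'.choose n * n) := by rw [← h0]
    _ = n ^ 2 * N'.choose n := by ring

lemma nat_idB (N' n : ℕ) :
    (n + 1) * (N' - n) * N'.choose (n + 1) = (N' - n) ^ 2 * N'.choose n := by
  have h0 := Nat.choose_succ_right_eq N' n
  calc (n + 1) * (N' - n) * N'.choose (n + 1)
      = (N' - n) * (N'.choose (n + 1) * (n + 1)) := by ring
    _ = (N' - n) * (N'.choose n * (N' - n)) := by rw [h0]
    _ = (N' - n) ^ 2 * N'.choose n := by ring

lemma sqrt_idB (N' n : ℕ) (h : n < N') :
    Real.sqrt (((n : ℝ) + 1) * (((N' : ℝ) + 1) - ((n : ℝ) + 1))) *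
        Real.sqrt (N'.choose (n + 1)) =
      ((N' - n : ℕ) : ℝ) * Real.sqrt (N'.choose n) := by
  have e : ((n : ℝ) + 1) * (((N' : ℝ) + 1) - ((n : ℝ) + 1)) =
      (((n + 1) * (N' - n) : ℕ) : ℝ) := by
    push_cast [Nat.cast_sub h.le]; ring
  rw [e, ← Real.sqrt_mul (by positivity),
    ← Nat.cast_mul, nat_idB N' n]
  rw [show ((N' - n) ^ 2 * N'.choose n : ℕ) = (((N' - n : ℕ)) ^ 2 * (N'.choose n) : ℕ) from rfl]
  push_cast
  rw [Real.sqrt_mul (by positivity), Real.sqrt_sq (by positivity)]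

lemma sqrt_idA (N' n : ℕ) (h1 : 1 ≤ n) (h2 : n ≤ N') :
    Real.sqrt ((n : ℝ) * (((N' : ℝ) + 1) - (n : ℝ))) * Real.sqrt (N'.choose (n - 1)) =
      (n : ℝ) * Real.sqrt (N'.choose n) := by
  have e : (n : ℝ) * (((N' : ℝ) + 1) - (n : ℝ)) = ((n * (N' + 1 - n) : ℕ) : ℝ) := by
    push_cast [Nat.cast_sub (by omega : n ≤ N' + 1)]; ring
  rw [e, ← Real.sqrt_mul (by positivity),
    ← Nat.cast_mul, nat_idA N' n h1 h2]
  push_cast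
  rw [Real.sqrt_mul (by positivity), Real.sqrt_sq (by positivity)]

noncomputable def uvec (N m : ℕ) : Fin N → ℂ :=
  fun i => ((Real.sqrt ((N - 1).choose i) : ℝ) : ℂ) * ((kraw (N - 1) m i : ℤ) : ℂ)

lemma jx_eigen (N m : ℕ) (hN : 0 < N) :
    (jxMatrixC N).mulVec (uvec N m) =
      ((((N : ℝ) - 1) / 2 - (m : ℝ) : ℝ) : ℂ) • uvec N m := by
  obtain ⟨N', rfl⟩ : ∃ N', N = N' + 1 := ⟨N - 1, by omega⟩
  funext i
  rw [jx_mulVec]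
  rcases i with ⟨n, hni⟩
  have hn : n ≤ N' := by omega
  have hrec0 := kraw_rec N' m n hn
  have hrec : ((n : ℂ)) * ((kraw N' m (n - 1) : ℤ) : ℂ)
      + (((N' : ℂ)) - (n : ℂ)) * ((kraw N' m (n + 1) : ℤ) : ℂ)
      + 2 * (m : ℂ) * ((kraw N' m n : ℤ) : ℂ) = ((N' : ℂ)) * ((kraw N' m n : ℤ) : ℂ) := by
    exact_mod_cast congrArg (Int.cast : ℤ → ℂ) hrec0
  simp only [uvec, Pi.smul_apply, smul_eq_mul, Fin.val_mk, Nat.add_sub_cancel]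
  by_cases htop : n + 1 < N' + 1
  · have htop' : n < N' := by omega
    have sB := sqrt_idB N' n htop'
    have sB' : ((Real.sqrt (((n : ℝ) + 1) * (((N' : ℝ) + 1) - ((n : ℝ) + 1))) : ℝ) : ℂ) *
        ((Real.sqrt (N'.choose (n + 1)) : ℝ) : ℂ) =
        ((N' : ℂ) - (n : ℂ)) * ((Real.sqrt (N'.choose n) : ℝ) : ℂ) := by
      rw [← Complex.ofReal_mul, sB, Complex.ofReal_mul, Nat.cast_sub htop'.le]
      push_cast; ring
    rw [dif_pos htop]
    by_cases hbot : 0 < n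
    · have sA := sqrt_idA N' n hbot hn
      have sA' : ((Real.sqrt ((n : ℝ) * (((N' : ℝ) + 1) - (n : ℝ))) : ℝ) : ℂ) *
          ((Real.sqrt (N'.choose (n - 1)) : ℝ) : ℂ) =
          ((n : ℂ)) * ((Real.sqrt (N'.choose n) : ℝ) : ℂ) := by
        rw [← Complex.ofReal_mul, sA, Complex.ofReal_mul]; push_cast; ring
      rw [dif_pos hbot]
      push_cast
      linear_combination (((Real.sqrt (N'.choose n) : ℝ) : ℂ) / 2) * hrec
        + (((kraw N' m (n + 1) : ℤ) : ℂ) / 2) * sB'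
        + (((kraw N' m (n - 1) : ℤ) : ℂ) / 2) * sA'
    · have hn0 : n = 0 := by omega
      subst hn0
      rw [dif_neg hbot]
      push_cast
      push_cast at hrec sB'
      linear_combination (((Real.sqrt (N'.choose 0) : ℝ) : ℂ) / 2) * hrec
        + (((kraw N' m 1 : ℤ) : ℂ) / 2) * sB'
  · have htopeq : n = N' := by omega
    rw [dif_neg htop]
    have hNn : ((N' : ℂ)) = ((n : ℂ)) := by rw [htopeq]
    by_cases hbot : 0 < n
    · have sA := sqrt_idA N' n hbot hn
      have sA' : ((Real.sqrt ((n : ℝ) * (((N' : ℝ) + 1) - (n : ℝ))) : ℝ) : ℂ) *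
          ((Real.sqrt (N'.choose (n - 1)) : ℝ) : ℂ) =
          ((n : ℂ)) * ((Real.sqrt (N'.choose n) : ℝ) : ℂ) := by
        rw [← Complex.ofReal_mul, sA, Complex.ofReal_mul]; push_cast; ring
      rw [dif_pos hbot]
      push_cast
      linear_combination (((Real.sqrt (N'.choose n) : ℝ) : ℂ) / 2) * hrec
        + (((kraw N' m (n - 1) : ℤ) : ℂ) / 2) * sA'
        + (-(((Real.sqrt (N'.choose n) : ℝ) : ℂ) * ((kraw N' m (n + 1) : ℤ) : ℂ)) / 2) * hNn
    · have hn0 : n = 0 := by omega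
      have hN'0 : N' = 0 := by omega
      subst hn0; subst hN'0
      rw [dif_neg hbot]
      push_cast
      rcases Nat.eq_zero_or_pos m with rfl | hm
      · simp
      · have : kraw 0 m 0 = 0 := by
          rw [kraw_zero]; simp [Nat.choose_eq_zero_of_lt hm]
        simp [this]

noncomputable def revM (N : ℕ) : Matrix (Fin N) (Fin N) ℂ :=
  Matrix.of fun i j => if (i : ℕ) + (j : ℕ) = N - 1 then 1 else 0

lemma revM_mulVec (N : ℕ) (v : Fin N → ℂ) (i : Fin N) :
    (revM N).mulVec v i = v ⟨N - 1 - (i : ℕ), by omega⟩ := by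
  rw [Matrix.mulVec, dotProduct]
  rw [Finset.sum_eq_single (⟨N - 1 - (i : ℕ), by omega⟩ : Fin N)]
  · rw [show revM N i ⟨N - 1 - (i : ℕ), by omega⟩ = 1 from by
      simp only [revM, Matrix.of_apply]; rw [if_pos (show (i : ℕ) + ((⟨N - 1 - (i : ℕ), by omega⟩ : Fin N) : ℕ) = N - 1 from by
        have := i.isLt
        show (i : ℕ) + (N - 1 - (i : ℕ)) = N - 1
        omega)]]
    ring
  · intro j _ hj
    rw [show revM N i j = 0 from by
      simp only [revM, Matrix.of_apply]
      rw [if_neg (fun hc => hj (by have := i.isLt; simp only [Fin.ext_iff]; omega))]]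
    ring
  · intro hj; exact absurd (Finset.mem_univ _) hj

lemma revM_eigen (N m : ℕ) (hN : 0 < N) :
    (revM N).mulVec (uvec N m) = ((-1 : ℂ) ^ m) • uvec N m := by
  funext i
  rw [revM_mulVec]
  simp only [uvec, Pi.smul_apply, smul_eq_mul, Fin.val_mk]
  have hi : (i : ℕ) ≤ N - 1 := by have := i.isLt; omega
  rw [show N - 1 - (i : ℕ) = (N - 1) - (i : ℕ) from rfl, Nat.choose_symm hi,
    kraw_symm (N - 1) m (i : ℕ) hi]
  push_cast
  ring

lemma uvec_ne_zero (N m : ℕ) (hm : m < N) (hN : 0 < N) : uvec N m ≠ 0 := by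
  intro h
  have h0 := congrFun h ⟨0, hN⟩
  simp only [uvec, Fin.val_mk, Pi.zero_apply, kraw_zero, Nat.choose_zero_right] at h0
  rw [Nat.cast_one, Real.sqrt_one, Complex.ofReal_one, one_mul] at h0
  have : ((N - 1).choose m : ℤ) ≠ 0 := by
    exact_mod_cast (Nat.choose_pos (by omega : m ≤ N - 1)).ne'
  exact this (by exact_mod_cast h0)

/-- The chain with couplings `Jₙ = (1/2)√(n(N-n))` achieves perfect state transfer in
time `t₀ = π`: `exp (-iπH) e₁ = e^{iφ} e_N` for some phase `φ`. -/
theorem jx_chain_perfect_state_transfer (N : ℕ) (hN : 0 < N) :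
    ∃ φ : ℝ,
      (NormedSpace.exp ((-(Complex.I * (Real.pi : ℂ))) • jxMatrixC N)).mulVec
          (Pi.single (⟨0, hN⟩ : Fin N) (1 : ℂ)) =
        Complex.exp (Complex.I * φ) •
          (Pi.single (⟨N - 1, by omega⟩ : Fin N) (1 : ℂ) : Fin N → ℂ) := by
  classical
  set φ : ℝ := -(Real.pi * ((N : ℝ) - 1)) / 2 with hφ
  refine ⟨φ, ?_⟩
  set B : Matrix (Fin N) (Fin N) ℂ := (-(Complex.I * (Real.pi : ℂ))) • jxMatrixC N with hB
  set c : ℂ := Complex.exp (Complex.I * φ) with hc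
  -- eigenvectors
  have hBeig : ∀ m : ℕ, B.mulVec (uvec N m) =
      ((-(Complex.I * (Real.pi : ℂ))) * ((((N : ℝ) - 1) / 2 - (m : ℝ) : ℝ) : ℂ)) • uvec N m := by
    intro m
    rw [hB, Matrix.smul_mulVec, jx_eigen N m hN, smul_smul]
  have hexp : ∀ m : ℕ, (NormedSpace.exp B).mulVec (uvec N m) =
      (c * (-1 : ℂ) ^ m) • uvec N m := by
    intro m
    rw [exp_mulVec_eigen B (uvec N m) _ (hBeig m)]
    congr 1
    rw [← Complex.exp_eq_exp_ℂ]
    rw [show (-(Complex.I * (Real.pi : ℂ))) * ((((N : ℝ) - 1) / 2 - (m : ℝ) : ℝ) : ℂ)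
        = Complex.I * (φ : ℂ) + (m : ℂ) * ((Real.pi : ℂ) * Complex.I) from by
      rw [hφ]; push_cast; ring]
    rw [Complex.exp_add, Complex.exp_nat_mul, Complex.exp_pi_mul_I, hc]
  have hrev : ∀ m : ℕ, (c • revM N).mulVec (uvec N m) = (c * (-1 : ℂ) ^ m) • uvec N m := by
    intro m
    rw [Matrix.smul_mulVec, revM_eigen N m hN, smul_smul]
  -- basis of eigenvectors
  haveI : Nonempty (Fin N) := Fin.pos_iff_nonempty.mp hN
  have hli : LinearIndependent ℂ (fun m : Fin N => uvec N (m : ℕ)) := by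
    apply Module.End.eigenvectors_linearIndependent' (Matrix.mulVecLin (jxMatrixC N))
      (fun m : Fin N => ((((N : ℝ) - 1) / 2 - ((m : ℕ) : ℝ) : ℝ) : ℂ))
    · intro a b hab
      have hab' : (((((N : ℝ) - 1) / 2 - ((a : ℕ) : ℝ)) : ℝ) : ℂ)
          = (((((N : ℝ) - 1) / 2 - ((b : ℕ) : ℝ)) : ℝ) : ℂ) := hab
      have h1 := Complex.ofReal_inj.mp hab'
      have h2 : ((a : ℕ) : ℝ) = ((b : ℕ) : ℝ) := by linarith
      exact Fin.ext (by exact_mod_cast h2)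
    · intro m
      constructor
      · rw [Module.End.mem_eigenspace_iff, Matrix.mulVecLin_apply, jx_eigen N (m : ℕ) hN]
      · exact uvec_ne_zero N (m : ℕ) m.isLt hN
  have hcard : Fintype.card (Fin N) = Module.finrank ℂ (Fin N → ℂ) := by
    simp [Module.finrank_pi]
  let b : Module.Basis (Fin N) ℂ (Fin N → ℂ) := basisOfLinearIndependentOfCardEqFinrank hli hcard
  have hb : ∀ m : Fin N, b m = uvec N (m : ℕ) := fun m => by
    rw [coe_basisOfLinearIndependentOfCardEqFinrank]
  have hmaps : (NormedSpace.exp B).mulVecLin = (c • revM N).mulVecLin := by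
    apply b.ext
    intro m
    rw [hb m, Matrix.mulVecLin_apply, Matrix.mulVecLin_apply, hexp (m : ℕ), hrev (m : ℕ)]
  have happ := congrFun (congrArg (fun f => (f : (Fin N → ℂ) → (Fin N → ℂ)))
    (congrArg DFunLike.coe hmaps)) (Pi.single (⟨0, hN⟩ : Fin N) (1 : ℂ))
  simp only [Matrix.mulVecLin_apply] at happ
  rw [happ, Matrix.smul_mulVec]
  congr 1
  funext i
  rw [revM_mulVec]
  simp only [Pi.single_apply, Fin.ext_iff, Fin.val_mk]
  have := i.isLt
  by_cases h : (i : ℕ) = N - 1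
  · rw [if_pos (by omega), if_pos (by omega)]
  · rw [if_neg (by omega), if_neg (by omega)]
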